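/- Let ℓ* ∈ [-1,1]^D satisfy Σ_i ℓ*(i) = 0 and ||ℓ*||_1 ≤ 2u, with P̂ + ℓ* ∈ Δ_D for a probability vector P̂. Let P^s ∈ Δ_D be another probability vector, and define ℓ componentwise by: ℓ(i) = ℓ*(i) if P^s(i) + ℓ*(i) ∈ [0,1], ℓ(i) = 1 - P^s(i) if ℓ*(i) > 0 and P^s(i) + ℓ*(i) > 1, ℓ(i) = -P^s(i) if ℓ*(i) < 0 and P^s(i) + ℓ*(i) < 0. Let ℓ̃ be the element of the TVDC perturbation set of P^s (i.e., {q - P^s : q ∈ Δ_D, ||q - P^s||_1 ≤ 2u}) minimizing ||ℓ* - ℓ̃||_1. Then ||ℓ* - ℓ̃||_1 ≤ 2||ℓ* - ℓ||_1. -/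

import Mathlib

/-- Redistribute the excess mass of `l` (with nonnegative sum) onto its positive part,
obtaining `l'` with zero sum, componentwise between `min (l i) 0` and `max (l i) 0`,
and with ℓ1 distance to `l` equal to the sum of `l`. -/
lemma scale_down_aux {D : ℕ} (l : Fin D → ℝ) (h0 : 0 ≤ ∑ i, l i) :
    ∃ l' : Fin D → ℝ, (∀ i, min (l i) 0 ≤ l' i ∧ l' i ≤ max (l i) 0) ∧
      (∑ i, l' i = 0) ∧ (∑ i, |l i - l' i| = ∑ i, l i) := by
  set s := ∑ i, l i with hs
  set pos := ∑ i, max (l i) 0 with hpos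
  have hsp : s ≤ pos := Finset.sum_le_sum fun i _ => le_max_left _ _
  have hpos0 : 0 ≤ pos := Finset.sum_nonneg fun i _ => le_max_right _ _
  by_cases hp : pos = 0
  · have hs0 : s = 0 := le_antisymm (hp ▸ hsp) h0
    exact ⟨l, fun i => ⟨min_le_left _ _, le_max_left _ _⟩, hs0, by simp [← hs, hs0]⟩
  · have hppos : 0 < pos := lt_of_le_of_ne hpos0 (Ne.symm hp)
    have hc0 : 0 ≤ s / pos := div_nonneg h0 hpos0
    have hc1 : s / pos ≤ 1 := (div_le_one hppos).mpr hsp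
    refine ⟨fun i => l i - (s / pos) * max (l i) 0, fun i => ?_, ?_, ?_⟩
    · show min (l i) 0 ≤ l i - s / pos * max (l i) 0 ∧
        l i - s / pos * max (l i) 0 ≤ max (l i) 0
      rcases le_total (l i) 0 with h | h
      · rw [max_eq_right h, min_eq_left h]
        constructor <;> simp [h]
      · rw [max_eq_left h, min_eq_right h]
        constructor <;> nlinarith
    · rw [Finset.sum_sub_distrib, ← Finset.mul_sum, ← hpos]
      field_simp
      linarith [hs]
    · have : ∀ i, |l i - (l i - (s / pos) * max (l i) 0)| = (s / pos) * max (l i) 0 := by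
        intro i
        rw [sub_sub_cancel, abs_of_nonneg (by positivity)]
      rw [Finset.sum_congr rfl fun i _ => this i, ← Finset.mul_sum, ← hpos]
      field_simp

/-- clipping lemma. `ℓ` is the componentwise clipping of `ℓ*` so that
`P^s + ℓ` stays in `[0,1]^D`, and `ℓ̃` is the ℓ1-closest element of the TVDC perturbation
set of `P^s` to `ℓ*`; then `‖ℓ* - ℓ̃‖₁ ≤ 2‖ℓ* - ℓ‖₁`. -/
theorem clipping_projection_bound (D : ℕ) (u : ℝ) (hu : 0 ≤ u)
    (Phat Ps lstar l ltil : Fin D → ℝ)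
    (hPhat : (∀ i, 0 ≤ Phat i) ∧ ∑ i, Phat i = 1)
    (hPs : (∀ i, 0 ≤ Ps i) ∧ ∑ i, Ps i = 1)
    (hlstar_sum : ∑ i, lstar i = 0)
    (hlstar_l1 : ∑ i, |lstar i| ≤ 2 * u)
    (hlstar_mem : ∀ i, 0 ≤ Phat i + lstar i ∧ Phat i + lstar i ≤ 1)
    (hlstar_bd : ∀ i, -1 ≤ lstar i ∧ lstar i ≤ 1)
    -- ℓ is the componentwise clipping of ℓ* relative to P^s
    (hl : ∀ i, l i =
      if 0 ≤ Ps i + lstar i ∧ Ps i + lstar i ≤ 1 then lstar i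
      else if 0 < lstar i then 1 - Ps i else -(Ps i))
    -- ℓ̃ is the ℓ1-projection of ℓ* onto the TVDC perturbation set of P^s
    (hltil_mem : (∃ q : Fin D → ℝ, (∀ i, 0 ≤ q i) ∧ (∑ i, q i = 1) ∧
        (∑ i, |q i - Ps i| ≤ 2 * u) ∧ ltil = fun i => q i - Ps i))
    (hltil_min : ∀ m : Fin D → ℝ,
      (∃ q : Fin D → ℝ, (∀ i, 0 ≤ q i) ∧ (∑ i, q i = 1) ∧
        (∑ i, |q i - Ps i| ≤ 2 * u) ∧ m = fun i => q i - Ps i) →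
      ∑ i, |lstar i - ltil i| ≤ ∑ i, |lstar i - m i|) :
    ∑ i, |lstar i - ltil i| ≤ 2 * ∑ i, |lstar i - l i| := by
  obtain ⟨hPs0, hPs1⟩ := hPs
  have hPsle : ∀ i, Ps i ≤ 1 := by
    intro i
    calc Ps i ≤ ∑ j, Ps j := Finset.single_le_sum (fun j _ => hPs0 j) (Finset.mem_univ i)
    _ = 1 := hPs1
  -- l lies between min(lstar, 0) and max(lstar, 0)
  have hbound : ∀ i, min (lstar i) 0 ≤ l i ∧ l i ≤ max (lstar i) 0 := by
    intro i
    rw [hl i]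
    split_ifs with h1 h2
    · exact ⟨min_le_left _ _, le_max_left _ _⟩
    · push_neg at h1
      have h3 : 1 < Ps i + lstar i := h1 (by linarith [hPs0 i])
      constructor
      · have : (0:ℝ) ≤ 1 - Ps i := by linarith [hPsle i]
        linarith [min_le_right (lstar i) (0:ℝ)]
      · have : 1 - Ps i ≤ lstar i := by linarith
        linarith [le_max_left (lstar i) (0:ℝ)]
    · push_neg at h1 h2
      have h3 : Ps i + lstar i < 0 := by
        by_contra hcon
        push_neg at hcon
        have := h1 hcon
        linarith [hPsle i]
      constructor
      · have : min (lstar i) 0 ≤ lstar i := min_le_left _ _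
        linarith
      · linarith [le_max_right (lstar i) (0:ℝ), hPs0 i]
  have hA : ∀ i, 0 ≤ Ps i + l i := by
    intro i
    rw [hl i]
    split_ifs with h1 h2
    · exact h1.1
    · linarith [hPs0 i]
    · linarith
  set s := ∑ i, l i with hsdef
  obtain ⟨l', hlb, hl0, hld⟩ : ∃ l' : Fin D → ℝ,
      (∀ i, min (l i) 0 ≤ l' i ∧ l' i ≤ max (l i) 0) ∧ (∑ i, l' i = 0) ∧
      (∑ i, |l i - l' i| = |s|) := by
    rcases le_or_gt 0 s with h | h
    · obtain ⟨l', a, b, c⟩ := scale_down_aux l h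
      exact ⟨l', a, b, by rw [c, ← hsdef, abs_of_nonneg h]⟩
    · obtain ⟨l'', a, b, c⟩ := scale_down_aux (fun i => -(l i))
        (by rw [Finset.sum_neg_distrib]; linarith)
      refine ⟨fun i => -(l'' i), fun i => ?_, by rw [Finset.sum_neg_distrib, b]; ring, ?_⟩
      · show min (l i) 0 ≤ -(l'' i) ∧ -(l'' i) ≤ max (l i) 0
        obtain ⟨a1, a2⟩ := a i
        rcases le_total (l i) 0 with h' | h'
        · rw [min_eq_left h', max_eq_right h']
          rw [min_eq_right (by linarith : (0:ℝ) ≤ -l i)] at a1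
          rw [max_eq_left (by linarith : (0:ℝ) ≤ -l i)] at a2
          exact ⟨by linarith, by linarith⟩
        · rw [min_eq_right h', max_eq_left h']
          rw [min_eq_left (by linarith : -l i ≤ (0:ℝ))] at a1
          rw [max_eq_right (by linarith : -l i ≤ (0:ℝ))] at a2
          exact ⟨by linarith, by linarith⟩
      · have : ∀ i, |l i - -(l'' i)| = |(-(l i)) - l'' i| := by
          intro i
          rw [← abs_neg]
          ring_nf
        rw [Finset.sum_congr rfl fun i _ => this i, c, Finset.sum_neg_distrib,
          ← hsdef, abs_of_neg h]
  -- the candidate probability vector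
  set q : Fin D → ℝ := fun i => Ps i + l' i with hq
  have hq0 : ∀ i, 0 ≤ q i := by
    intro i
    have h1 := (hlb i).1
    rcases le_total (l i) 0 with h' | h'
    · rw [min_eq_left h'] at h1
      have := hA i
      simp only [hq]
      linarith
    · rw [min_eq_right h'] at h1
      have := hPs0 i
      simp only [hq]
      linarith
  have hq1 : ∑ i, q i = 1 := by
    simp only [hq]
    rw [Finset.sum_add_distrib, hPs1, hl0]
    ring
  have habs_ll : ∀ i, |l i| ≤ |lstar i| := by
    intro i
    obtain ⟨b1, b2⟩ := hbound i
    rw [abs_le]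
    constructor
    · have : -|lstar i| ≤ min (lstar i) 0 :=
        le_min (neg_abs_le _) (neg_nonpos.mpr (abs_nonneg _))
      linarith
    · have : max (lstar i) 0 ≤ |lstar i| :=
        max_le (le_abs_self _) (abs_nonneg _)
      linarith
  have habs : ∀ i, |l' i| ≤ |lstar i| := by
    intro i
    obtain ⟨b1, b2⟩ := hlb i
    have h1 : -|lstar i| ≤ min (l i) 0 :=
      le_min (by linarith [neg_abs_le (l i), habs_ll i]) (neg_nonpos.mpr (abs_nonneg _))
    have h2 : max (l i) 0 ≤ |lstar i| :=
      max_le (by linarith [le_abs_self (l i), habs_ll i]) (abs_nonneg _)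
    rw [abs_le]
    exact ⟨by linarith, by linarith⟩
  have hq2 : ∑ i, |q i - Ps i| ≤ 2 * u := by
    have : ∀ i, |q i - Ps i| = |l' i| := by
      intro i; simp only [hq]; ring_nf
    rw [Finset.sum_congr rfl fun i _ => this i]
    calc ∑ i, |l' i| ≤ ∑ i, |lstar i| := Finset.sum_le_sum fun i _ => habs i
    _ ≤ 2 * u := hlstar_l1
  have key := hltil_min (fun i => q i - Ps i) ⟨q, hq0, hq1, hq2, rfl⟩
  have hsle : |s| ≤ ∑ i, |lstar i - l i| := by
    have h1 : s = ∑ i, (l i - lstar i) := by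
      rw [Finset.sum_sub_distrib, hlstar_sum, ← hsdef]; ring
    rw [h1]
    calc |∑ i, (l i - lstar i)| ≤ ∑ i, |l i - lstar i| := Finset.abs_sum_le_sum_abs _ _
    _ = ∑ i, |lstar i - l i| := Finset.sum_congr rfl fun i _ => abs_sub_comm _ _
  have htri : ∑ i, |lstar i - (q i - Ps i)| ≤ ∑ i, |lstar i - l i| + ∑ i, |l i - l' i| := by
    rw [← Finset.sum_add_distrib]
    refine Finset.sum_le_sum fun i _ => ?_
    have : lstar i - (q i - Ps i) = (lstar i - l i) + (l i - l' i) := by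
      simp only [hq]; ring
    rw [this]
    exact abs_add_le _ _
  have final : ∑ i, |lstar i - (q i - Ps i)| ≤ 2 * ∑ i, |lstar i - l i| := by
    rw [hld] at htri
    linarith
  calc ∑ i, |lstar i - ltil i| ≤ ∑ i, |lstar i - (q i - Ps i)| := key
  _ ≤ 2 * ∑ i, |lstar i - l i| := final
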